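/- Let G be a non-bipartite graph whose smallest induced odd cycle has length 2n+1 and let C be such a cycle with m_C the product of its vertices. Then m_C ∉ I(G)^{n+1} but x·m_C ∈ I(G)^{n+1} for every vertex x in N_G(V(C)). -/

import Mathlib

open MvPolynomial

noncomputable section

/-- The integral closure of an ideal `I`: an element `r` belongs to it iff `r·t` is
integral over the Rees algebra `R[It]` inside `R[t]`; equivalently, `r` satisfies an
equation `r^n + a₁ r^{n-1} + ⋯ + aₙ = 0` with `aᵢ ∈ Iⁱ`. -/
def Ideal.intCl {R : Type*} [CommRing R] (I : Ideal R) : Ideal R where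
  carrier := {r | (Polynomial.C r * Polynomial.X : Polynomial R) ∈
      integralClosure (reesAlgebra I) (Polynomial R)}
  zero_mem' := by
    simp only [Set.mem_setOf_eq, map_zero, zero_mul]
    exact Subalgebra.zero_mem _
  add_mem' := by
    intro a b ha hb
    simp only [Set.mem_setOf_eq, map_add, add_mul] at ha hb ⊢
    exact Subalgebra.add_mem _ ha hb
  smul_mem' := by
    intro c x hx
    simp only [Set.mem_setOf_eq] at hx ⊢
    have hmem : (Polynomial.C c : Polynomial R) ∈ reesAlgebra I := by
      rw [← Polynomial.algebraMap_eq]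
      exact Subalgebra.algebraMap_mem _ c
    have hc : (Polynomial.C c : Polynomial R) ∈
        integralClosure (reesAlgebra I) (Polynomial R) := by
      simpa using Subalgebra.algebraMap_mem
        (integralClosure (reesAlgebra I) (Polynomial R)) (⟨Polynomial.C c, hmem⟩ : reesAlgebra I)
    have heq : Polynomial.C (c • x) * Polynomial.X
        = Polynomial.C c * (Polynomial.C x * Polynomial.X) := by
      rw [smul_eq_mul, Polynomial.C_mul, mul_assoc]
    rw [heq]
    exact mul_mem hc hx

/-- The `s`-th symbolic power of an ideal, as the intersection of the `s`-th powers of its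
minimal primes (the appropriate definition for radical, e.g. squarefree monomial, ideals). -/
def Ideal.symbPow {R : Type*} [CommRing R] (I : Ideal R) (s : ℕ) : Ideal R :=
  ⨅ p ∈ I.minimalPrimes, p ^ s

section Koszul

variable (k : Type*) [Field k] (σ : Type*) [Fintype σ] [LinearOrder σ]

/-- The Koszul differential (on the Koszul complex of the variables, with coefficients in
the polynomial ring). -/
def koszulD : ∀ i : ℕ,
    (({s : Finset σ // s.card = i} → MvPolynomial σ k) →ₗ[k]
      ({s : Finset σ // s.card = i - 1} → MvPolynomial σ k))
  | 0 => 0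
  | (i + 1) =>
    LinearMap.pi fun t : {s : Finset σ // s.card = i} =>
      ∑ x ∈ (t.1ᶜ).attach,
        ((-1 : k) ^ ((t.1.filter (fun a => a < x.1)).card)) •
          ((LinearMap.mulLeft k (X x.1 : MvPolynomial σ k)).comp
            (LinearMap.proj (⟨insert x.1 t.1, by
              rw [Finset.card_insert_of_notMem (Finset.mem_compl.mp x.2), t.2]⟩ :
                {s : Finset σ // s.card = i + 1})))

variable {k σ}

/-- The degree `j` strand of homological degree `i` of the Koszul complex with coefficients
in the ideal `I`. -/
def koszulStrand (I : Ideal (MvPolynomial σ k)) (i j : ℕ) :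
    Submodule k ({s : Finset σ // s.card = i} → MvPolynomial σ k) :=
  if i ≤ j then
    Submodule.pi Set.univ fun _ =>
      (Submodule.restrictScalars k (I : Submodule (MvPolynomial σ k) (MvPolynomial σ k))) ⊓
        homogeneousSubmodule σ k (j - i)
  else ⊥

/-- The degree `j` cycles in homological degree `i` of the Koszul complex with values in `I`. -/
def koszulCycles (I : Ideal (MvPolynomial σ k)) (i j : ℕ) :
    Submodule k ({s : Finset σ // s.card = i} → MvPolynomial σ k) :=
  koszulStrand I i j ⊓ LinearMap.ker (koszulD k σ i)

/-- The graded Betti number `β_{i,j}(I) = dim_k (Tor_i(I,k))_j`, computed via the Koszul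
complex. -/
def gradedBetti (I : Ideal (MvPolynomial σ k)) (i j : ℕ) : Cardinal :=
  Module.rank k
    ((↥(koszulCycles I i j)) ⧸
      (Submodule.comap (koszulCycles I i j).subtype
        (Submodule.map (koszulD k σ (i + 1)) (koszulStrand I (i + 1) j))))

/-- The Castelnuovo–Mumford regularity of an ideal: `max { j - i : β_{i,j}(I) ≠ 0 }`. -/
def reg (I : Ideal (MvPolynomial σ k)) : ℤ :=
  sSup {d : ℤ | ∃ i j : ℕ, gradedBetti I i j ≠ 0 ∧ d = (j : ℤ) - (i : ℤ)}

end Koszul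

section Graphs

variable (k : Type*) [Field k] {V : Type*}

/-- The edge ideal of a graph. -/
def edgeIdeal (G : SimpleGraph V) : Ideal (MvPolynomial V k) :=
  Ideal.span {p | ∃ u v, G.Adj u v ∧ p = X u * X v}

/-- The edge ideal of the induced subgraph of `G` on a set `S` of vertices. -/
def edgeIdealOn (G : SimpleGraph V) (S : Set V) : Ideal (MvPolynomial V k) :=
  Ideal.span {p | ∃ u v, G.Adj u v ∧ u ∈ S ∧ v ∈ S ∧ p = X u * X v}

variable {k}

/-- A cycle of length `m` in `G`, given by an injective map from `ZMod m` whose consecutive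
values are adjacent. -/
def IsCycleMap (G : SimpleGraph V) (m : ℕ) (c : ZMod m → V) : Prop :=
  Function.Injective c ∧ ∀ i, G.Adj (c i) (c (i + 1))

/-- An induced cycle: a cycle with no chords. -/
def IsInducedCycleMap (G : SimpleGraph V) (m : ℕ) (c : ZMod m → V) : Prop :=
  IsCycleMap G m c ∧ ∀ i j : ZMod m, G.Adj (c i) (c j) → j = i + 1 ∨ i = j + 1

/-- A bow in `G`: two (odd) cycles which are vertex-disjoint and at distance at least two
(no edge between them). -/
def IsBow (G : SimpleGraph V) {p q : ℕ} (c₁ : ZMod p → V) (c₂ : ZMod q → V) : Prop :=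
  IsCycleMap G p c₁ ∧ IsCycleMap G q c₂ ∧ (∀ i j, c₁ i ≠ c₂ j) ∧
    ∀ i j, ¬ G.Adj (c₁ i) (c₂ j)

/-- The induced matching number of the induced subgraph of `G` on the vertex set `S`. -/
def inducedMatchingNumber (G : SimpleGraph V) (S : Set V) : ℕ :=
  sSup {r | ∃ M : Finset (V × V), M.card = r ∧
    (∀ e ∈ M, e.1 ∈ S ∧ e.2 ∈ S ∧ G.Adj e.1 e.2) ∧
    ∀ e ∈ M, ∀ f ∈ M, e ≠ f →
      ∀ u ∈ ({e.1, e.2} : Set V), ∀ w ∈ ({f.1, f.2} : Set V), u ≠ w ∧ ¬ G.Adj u w}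

/-- The vertex cover number of a graph. -/
def coverNumber [Fintype V] (G : SimpleGraph V) : ℕ :=
  sInf {r | ∃ C : Finset V, C.card = r ∧ ∀ u v, G.Adj u v → u ∈ C ∨ v ∈ C}

/-- The parallelization `G^v` of a graph `G`: the vertex `i` is deleted when `v i = 0` and
duplicated `v i - 1` times when `v i ≥ 1`. -/
def parallelization (G : SimpleGraph V) (v : V → ℕ) : SimpleGraph ((i : V) × Fin (v i)) where
  Adj a b := G.Adj a.1 b.1
  symm := ⟨fun _ _ h => G.adj_symm h⟩
  loopless := ⟨fun a h => G.irrefl h⟩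

end Graphs

section Stmt8Aux

variable {k : Type*} [Field k] {V : Type*}

/-- The total degree of an exponent vector, as an additive monoid hom. -/
def finsuppDeg (V : Type*) : (V →₀ ℕ) →+ ℕ where
  toFun m := m.sum fun _ e => e
  map_zero' := Finsupp.sum_zero_index
  map_add' a b := by
    show (a + b).sum (fun _ e => e) = a.sum (fun _ e => e) + b.sum (fun _ e => e)
    exact Finsupp.sum_add_index' (fun _ => rfl) (fun _ _ _ => rfl)

@[simp] lemma finsuppDeg_single (x : V) (e : ℕ) : finsuppDeg V (Finsupp.single x e) = e := by
  show (Finsupp.single x e).sum (fun _ n => n) = e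
  exact Finsupp.sum_single_index rfl

/-- The ideal of polynomials all of whose monomials have degree at least `d`. -/
def degJ (k V : Type*) [Field k] (d : ℕ) : Ideal (MvPolynomial V k) where
  carrier := {p | ∀ m ∈ p.support, d ≤ finsuppDeg V m}
  zero_mem' := by intro m hm; simp at hm
  add_mem' := by
    classical
    intro a b ha hb m hm
    rcases Finset.mem_union.mp (MvPolynomial.support_add hm) with h | h
    · exact ha m h
    · exact hb m h
  smul_mem' := by
    classical
    intro r p hp m hm
    obtain ⟨a, _, b, hb, rfl⟩ := Finset.mem_add.mp (MvPolynomial.support_mul r p hm)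
    have := hp b hb
    rw [map_add]
    omega

lemma degJ_mul_le (a b : ℕ) : degJ k V a * degJ k V b ≤ degJ k V (a + b) := by
  classical
  rw [Ideal.mul_le]
  intro p hp q hq m hm
  obtain ⟨mp, hmp, mq, hmq, rfl⟩ := Finset.mem_add.mp (MvPolynomial.support_mul p q hm)
  rw [map_add]
  exact add_le_add (hp mp hmp) (hq mq hmq)

lemma prodX {ι : Type*} (f : ι → V) (s : Finset ι) :
    (∏ i ∈ s, (X (f i)) : MvPolynomial V k)
      = MvPolynomial.monomial (∑ i ∈ s, Finsupp.single (f i) 1) 1 := by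
  classical
  induction s using Finset.induction with
  | empty => simp
  | @insert a s h ih =>
    rw [Finset.prod_insert h, Finset.sum_insert h, ih, ← pow_one (X (f _)),
      MvPolynomial.X_pow_eq_monomial, MvPolynomial.monomial_mul, one_mul]

lemma edgeIdeal_le_degJ (G : SimpleGraph V) : edgeIdeal k G ≤ degJ k V 2 := by
  classical
  rw [edgeIdeal, Ideal.span_le]
  rintro p ⟨u, v, huv, rfl⟩ m hm
  have h2 : (X u * X v : MvPolynomial V k)
      = MvPolynomial.monomial (Finsupp.single u 1 + Finsupp.single v 1) 1 := by
    rw [← pow_one (X u), ← pow_one (X v), MvPolynomial.X_pow_eq_monomial,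
      MvPolynomial.X_pow_eq_monomial, MvPolynomial.monomial_mul, one_mul]
  rw [h2, MvPolynomial.support_monomial] at hm
  simp only [one_ne_zero, if_false, Finset.mem_singleton] at hm
  subst hm
  simp [map_add]

lemma edgeIdeal_pow_le_degJ (G : SimpleGraph V) (s : ℕ) :
    edgeIdeal k G ^ s ≤ degJ k V (2 * s) := by
  induction s with
  | zero => intro p _ m _; exact Nat.zero_le _
  | succ s ih =>
    rw [pow_succ]
    refine le_trans (Ideal.mul_mono ih (edgeIdeal_le_degJ G)) ?_
    have := degJ_mul_le (k := k) (V := V) (2 * s) 2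
    rwa [show 2 * s + 2 = 2 * (s + 1) by ring] at this

lemma prod_range_two_mul {M : Type*} [CommMonoid M] (g : ℕ → M) (n : ℕ) :
    ∏ j ∈ Finset.range (2 * n), g j = ∏ t ∈ Finset.range n, (g (2 * t) * g (2 * t + 1)) := by
  induction n with
  | zero => simp
  | succ m ih =>
    rw [show 2 * (m + 1) = 2 * m + 1 + 1 by ring, Finset.prod_range_succ,
      Finset.prod_range_succ, ih, Finset.prod_range_succ, mul_assoc]

end Stmt8Aux

/-- With smallest induced odd cycle `C` of length `2n+1` in a non-bipartite `G`:
`m_C ∉ I(G)^{n+1}` but `x·m_C ∈ I(G)^{n+1}` for every `x ∈ N_G(V(C))`. -/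
theorem stmt8 (k : Type*) [Field k] {V : Type*} (G : SimpleGraph V)
    (hnb : ¬ G.Colorable 2) (n : ℕ)
    (hex : ∃ c : ZMod (2 * n + 1) → V, IsInducedCycleMap G (2 * n + 1) c)
    (hmin : ∀ (m : ℕ) (c : ZMod (2 * m + 1) → V), IsInducedCycleMap G (2 * m + 1) c → n ≤ m)
    (c : ZMod (2 * n + 1) → V) (hc : IsInducedCycleMap G (2 * n + 1) c) :
    (∏ i : ZMod (2 * n + 1), X (c i) : MvPolynomial V k) ∉ edgeIdeal k G ^ (n + 1) ∧
    ∀ x : V, (∃ i, G.Adj x (c i)) →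
      X x * (∏ i : ZMod (2 * n + 1), X (c i) : MvPolynomial V k) ∈ edgeIdeal k G ^ (n + 1) := by
  haveI : NeZero (2 * n + 1) := ⟨by omega⟩
  constructor
  · intro hmem
    have h1 := edgeIdeal_pow_le_degJ (k := k) G (n + 1) hmem
    rw [prodX c Finset.univ] at h1
    classical
    have h3 := h1 (∑ i : ZMod (2 * n + 1), Finsupp.single (c i) 1) ?_
    · rw [map_sum] at h3
      simp only [finsuppDeg_single] at h3
      rw [Finset.sum_const, Finset.card_univ, ZMod.card, smul_eq_mul, mul_one] at h3
      omega
    · rw [MvPolynomial.support_monomial]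
      simp
  · rintro x ⟨i, hxi⟩
    set F : ℕ → MvPolynomial V k := fun j => X (c (i + (j : ZMod (2 * n + 1)))) with hF
    have hedge : ∀ u v, G.Adj u v → (X u * X v : MvPolynomial V k) ∈ edgeIdeal k G :=
      fun u v h => Ideal.subset_span ⟨u, v, h, rfl⟩
    have e1 : (∏ j : ZMod (2 * n + 1), X (c j) : MvPolynomial V k)
        = ∏ j ∈ Finset.range (2 * n + 1), F j := by
      refine Finset.prod_nbij' (fun a => (a - i).val) (fun j => i + (j : ZMod (2 * n + 1)))
        ?_ ?_ ?_ ?_ ?_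
      · intro a _; exact Finset.mem_range.mpr (ZMod.val_lt _)
      · intro a _; exact Finset.mem_univ _
      · intro a _
        show i + (((a - i).val : ℕ) : ZMod (2 * n + 1)) = a
        rw [ZMod.natCast_rightInverse (a - i), add_sub_cancel]
      · intro j hj
        show ((i + (j : ZMod (2 * n + 1))) - i).val = j
        rw [add_sub_cancel_left, ZMod.val_cast_of_lt (Finset.mem_range.mp hj)]
      · intro a _
        show X (c a) = X (c (i + (((a - i).val : ℕ) : ZMod (2 * n + 1))))
        rw [ZMod.natCast_rightInverse (a - i), add_sub_cancel]
    have hpair : ∀ t : ℕ, (F (2 * t + 1) * F (2 * t + 1 + 1)) ∈ edgeIdeal k G := by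
      intro t
      have hcast : ((2 * t + 1 + 1 : ℕ) : ZMod (2 * n + 1))
          = ((2 * t + 1 : ℕ) : ZMod (2 * n + 1)) + 1 := by push_cast; ring
      have : F (2 * t + 1 + 1) = X (c (i + ((2 * t + 1 : ℕ) : ZMod (2 * n + 1)) + 1)) := by
        rw [hF]; simp only []; rw [hcast, add_assoc]
      rw [this, hF]
      exact hedge _ _ (hc.1.2 (i + ((2 * t + 1 : ℕ) : ZMod (2 * n + 1))))
    have hprod : ∀ m : ℕ,
        (∏ t ∈ Finset.range m, (F (2 * t + 1) * F (2 * t + 1 + 1))) ∈ edgeIdeal k G ^ m := by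
      intro m
      induction m with
      | zero => simpa using Submodule.mem_top
      | succ m ih =>
        rw [Finset.prod_range_succ, pow_succ]
        exact Ideal.mul_mem_mul ih (hpair m)
    have hF0 : F 0 = X (c i) := by rw [hF]; simp
    have key : X x * (∏ j : ZMod (2 * n + 1), X (c j) : MvPolynomial V k)
        = (∏ t ∈ Finset.range n, (F (2 * t + 1) * F (2 * t + 1 + 1))) * (X x * X (c i)) := by
      rw [e1, Finset.prod_range_succ' F (2 * n), prod_range_two_mul (fun j => F (j + 1)) n, hF0]
      ring
    rw [key, pow_succ]
    exact Ideal.mul_mem_mul (hprod n) (hedge _ _ hxi)
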